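/- Any inclusion-minimal Steiner minimum cut X is a maximal supreme set: X is extreme, X has no extreme proper superset, and X = μ(X∩T). -/
import Mathlib


variable {V : Type*}

def IsSteinerCut (T X : Set V) : Prop := (X ∩ T).Nonempty ∧ ¬ T ⊆ X

def SteinerExtreme (d : Set V → ℝ) (T X : Set V) : Prop :=
  IsSteinerCut T X ∧ ∀ Y, IsSteinerCut T Y → Y ⊂ X → d X < d Y

def Crosses (X Y : Set V) : Prop :=
  (X ∩ Y).Nonempty ∧ (X \ Y).Nonempty ∧ (Y \ X).Nonempty

def supremeSet (d : Set V → ℝ) (T R : Set V) : Set V :=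
  ⋃₀ {X | SteinerExtreme d T X ∧ X ∩ T = R}

/-- A Steiner min cut: a Steiner cut of minimum cut value. -/
def IsSteinerMinCut (d : Set V → ℝ) (T X : Set V) : Prop :=
  IsSteinerCut T X ∧ ∀ Y, IsSteinerCut T Y → d X ≤ d Y

/-- Any inclusion-minimal Steiner min cut `X` is a maximal supreme set:
`X` is extreme, has no extreme proper superset, and `X = μ(X ∩ T)`. -/
theorem minimal_steinerMinCut_is_maximal_supreme [Fintype V] (d : Set V → ℝ) (T X : Set V)
    (hsub : ∀ A B : Set V, d (A ∩ B) + d (A ∪ B) ≤ d A + d B)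
    (hpos : ∀ A B : Set V, d (A \ B) + d (B \ A) ≤ d A + d B)
    (h4 : ∀ A B : Set V, Crosses A B → max (d A) (d B) < d (A ∩ B) →
      d (A ∪ B) < min (d A) (d B))
    (hX : IsSteinerMinCut d T X)
    (hmin : ∀ Y, IsSteinerMinCut d T Y → Y ⊆ X → Y = X) :
    SteinerExtreme d T X ∧
      (∀ Y, SteinerExtreme d T Y → X ⊂ Y → False) ∧
      X = supremeSet d T (X ∩ T) := by
  obtain ⟨hXcut, hXmin⟩ := hX
  have hext : SteinerExtreme d T X := by
    refine ⟨hXcut, fun Y hY hYX => ?_⟩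
    rcases lt_or_eq_of_le (hXmin Y hY) with h | h
    · exact h
    · exact absurd (hmin Y ⟨hY, fun W hW => h ▸ hXmin W hW⟩ hYX.subset) hYX.ne
  refine ⟨hext, ?_, ?_⟩
  · intro Y hY hXY
    exact absurd (hXmin Y hY.1) (not_le.mpr (hY.2 X hXcut hXY))
  · apply Set.Subset.antisymm
    · exact Set.subset_sUnion_of_mem ⟨hext, rfl⟩
    · intro v hv
      obtain ⟨Z, ⟨hZext, hZT⟩, hvZ⟩ := hv
      suffices h : Z ⊆ X from h hvZ
      by_contra hns
      obtain ⟨a, haZ, haX⟩ := Set.not_subset.mp hns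
      by_cases hXZ : X ⊆ Z
      · have hss : X ⊂ Z := ⟨hXZ, fun h => haX (h haZ)⟩
        exact absurd (hXmin Z hZext.1) (not_le.mpr (hZext.2 X hXcut hss))
      · obtain ⟨b, hbX, hbZ⟩ := Set.not_subset.mp hXZ
        have hsup : X ∩ T ⊆ Z ∩ T := hZT.superset
        have hIcut : IsSteinerCut T (X ∩ Z) := by
          constructor
          · obtain ⟨x, hx⟩ := hXcut.1
            exact ⟨x, ⟨hx.1, (hsup hx).1⟩, hx.2⟩
          · intro h
            exact hXcut.2 (fun t ht => (h ht).1)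
        have h1 : X ∩ Z ⊂ Z :=
          ⟨Set.inter_subset_right, fun h => haX (h haZ).1⟩
        have h2 : X ∩ Z ⊂ X :=
          ⟨Set.inter_subset_left, fun h => hbZ (h hbX).2⟩
        have dZ : d Z < d (X ∩ Z) := hZext.2 (X ∩ Z) hIcut h1
        have dX : d X < d (X ∩ Z) := hext.2 (X ∩ Z) hIcut h2
        have hcross : Crosses X Z := by
          refine ⟨?_, ⟨b, hbX, hbZ⟩, ⟨a, haZ, haX⟩⟩
          obtain ⟨x, hx⟩ := hXcut.1
          exact ⟨x, hx.1, (hsup hx).1⟩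
        have hU := h4 X Z hcross (max_lt dX dZ)
        have hUcut : IsSteinerCut T (X ∪ Z) := by
          constructor
          · obtain ⟨x, hx⟩ := hXcut.1
            exact ⟨x, Or.inl hx.1, hx.2⟩
          · intro h
            apply hXcut.2
            intro t ht
            rcases h ht with h' | h'
            · exact h'
            · exact (hZT.subset ⟨h', ht⟩).1
        have := hXmin (X ∪ Z) hUcut
        have := min_le_left (d X) (d Z)
        linarith
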